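/- Let A, Â ∈ ℝ^{n×n} be symmetric matrices with 0 ⪯ Â ⪯ A, and set P̂ := Â + I and M̂ := P̂^{-1/2}(A+I)P̂^{-1/2}. Then for every index i (with eigenvalues ordered decreasingly), 1 ≤ λᵢ(M̂) ≤ λᵢ(A + I); consequently ‖log(M̂)‖_F ≤ ‖log(A + I)‖_F. -/

import Mathlib

open MeasureTheory ProbabilityTheory Matrix

/-- Matrix logarithm of a real symmetric matrix, obtained by applying the real logarithm
to the eigenvalues in a spectral decomposition. -/
noncomputable def matLog {n : ℕ} (B : Matrix (Fin n) (Fin n) ℝ) : Matrix (Fin n) (Fin n) ℝ :=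
  if hB : B.IsHermitian then
    (hB.eigenvectorUnitary : Matrix (Fin n) (Fin n) ℝ) *
      Matrix.diagonal (fun i => Real.log (hB.eigenvalues i)) *
      (star (hB.eigenvectorUnitary : Matrix (Fin n) (Fin n) ℝ))
  else 0

open scoped Classical in
/-- `B^{-1/2}`: the inverse of the unique positive semidefinite square root of a
positive semidefinite matrix `B`. -/
noncomputable def invSqrt {n : ℕ} (B : Matrix (Fin n) (Fin n) ℝ) : Matrix (Fin n) (Fin n) ℝ :=
  if hB : B.PosSemidef then
    ((hB.1.eigenvectorUnitary : Matrix (Fin n) (Fin n) ℝ) *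
      Matrix.diagonal (fun i => Real.sqrt (hB.1.eigenvalues i)) *
      (star (hB.1.eigenvectorUnitary : Matrix (Fin n) (Fin n) ℝ)))⁻¹
  else 0

/-- Squared Frobenius norm of a matrix. -/
noncomputable def frobSq {m n : ℕ} (H : Matrix (Fin m) (Fin n) ℝ) : ℝ :=
  ∑ i, ∑ j, (H i j) ^ 2

/-- Singular values of a matrix (square roots of the eigenvalues of `HᴴH`). -/
noncomputable def singVals {m n : ℕ} (H : Matrix (Fin m) (Fin n) ℝ) : Fin n → ℝ :=
  fun i => Real.sqrt (((by simpa using Matrix.isHermitian_conjTranspose_mul_self H :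
    (Hᵀ * H).IsHermitian)).eigenvalues i)

/-- Nuclear norm: sum of the singular values. -/
noncomputable def nuclearNorm {m n : ℕ} (H : Matrix (Fin m) (Fin n) ℝ) : ℝ :=
  ∑ i, singVals H i

/-- Spectral norm: largest singular value. -/
noncomputable def specNorm {m n : ℕ} (H : Matrix (Fin m) (Fin n) ℝ) : ℝ :=
  ⨆ i, singVals H i

/-- Eigenvalues of a symmetric matrix, sorted in decreasing order
(`eigDesc B i` is the `i`-th largest eigenvalue). -/
noncomputable def eigDesc {n : ℕ} (B : Matrix (Fin n) (Fin n) ℝ) : Fin n → ℝ :=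
  if hB : B.IsHermitian then
    fun i => (hB.eigenvalues ∘ Tuple.sort hB.eigenvalues) i.rev
  else 0

/-- Law of a standard Gaussian random vector in `ℝⁿ` (i.i.d. `gaussianReal 0 1` entries). -/
noncomputable def stdGaussian (n : ℕ) : Measure (Fin n → ℝ) :=
  Measure.pi fun _ => gaussianReal 0 1

/-- Law of a random `n × ℓ` matrix with i.i.d. standard Gaussian entries. -/
noncomputable def stdGaussianMatrix (n ℓ : ℕ) : Measure (Fin n → Fin ℓ → ℝ) :=
  Measure.pi fun _ => Measure.pi fun _ => gaussianReal 0 1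

/-- The truncated-spectral-decomposition preconditioner `P_r = A_r + I`, where
`A_r = U_r Λ_r U_rᵀ` keeps the `r` leading eigenvalues. -/
noncomputable def truncP {n : ℕ} (U : Matrix (Fin n) (Fin n) ℝ) (lam : Fin n → ℝ) (r : ℕ) :
    Matrix (Fin n) (Fin n) ℝ :=
  U * Matrix.diagonal (fun i : Fin n => if (i : ℕ) < r then lam i else 0) * Uᵀ + 1

/-- The idealized preconditioned matrix `M_r = P_r^{-1/2} (A + I) P_r^{-1/2}`. -/
noncomputable def truncM {n : ℕ} (A U : Matrix (Fin n) (Fin n) ℝ) (lam : Fin n → ℝ) (r : ℕ) :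
    Matrix (Fin n) (Fin n) ℝ :=
  invSqrt (truncP U lam r) * (A + 1) * invSqrt (truncP U lam r)

/-- The Nyström approximation `Â = AΩ(ΩᵀAΩ)⁻¹ΩᵀA`. -/
noncomputable def nystrom {n ℓ : ℕ} (A : Matrix (Fin n) (Fin n) ℝ)
    (Ω : Matrix (Fin n) (Fin ℓ) ℝ) : Matrix (Fin n) (Fin n) ℝ :=
  A * Ω * (Ωᵀ * A * Ω)⁻¹ * Ωᵀ * A

/-- The Nyström-preconditioned matrix `M̂ = P̂^{-1/2} (A + I) P̂^{-1/2}` with `P̂ = Â + I`. -/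
noncomputable def nysPrec {n ℓ : ℕ} (A : Matrix (Fin n) (Fin n) ℝ)
    (Ω : Matrix (Fin n) (Fin ℓ) ℝ) : Matrix (Fin n) (Fin n) ℝ :=
  invSqrt (nystrom A Ω + 1) * (A + 1) * invSqrt (nystrom A Ω + 1)

section CFAux

open Finset Module

variable {n : ℕ}

lemma dot_self_pos {v : Fin n → ℝ} (hv : v ≠ 0) : 0 < v ⬝ᵥ v := by
  obtain ⟨i, hi⟩ := Function.ne_iff.mp hv
  exact Finset.sum_pos' (fun i _ => mul_self_nonneg _)
    ⟨i, Finset.mem_univ i, mul_self_pos.mpr hi⟩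

lemma dot_mulVec_left (U : Matrix (Fin n) (Fin n) ℝ) (a w : Fin n → ℝ) :
    (U *ᵥ a) ⬝ᵥ w = a ⬝ᵥ (Uᵀ *ᵥ w) := by
  rw [dotProduct_comm, dotProduct_mulVec, dotProduct_comm, mulVec_transpose]

/-- Span of a subfamily of the standard basis. -/
noncomputable def stdSub (J : Finset (Fin n)) : Submodule ℝ (Fin n → ℝ) :=
  Submodule.span ℝ
    (Set.range (fun j : {x // x ∈ J} => (Pi.single (j : Fin n) (1 : ℝ) : Fin n → ℝ)))

lemma stdSub_apply_eq_zero {J : Finset (Fin n)} {v : Fin n → ℝ} (hv : v ∈ stdSub J)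
    {j : Fin n} (hj : j ∉ J) : v j = 0 := by
  induction hv using Submodule.span_induction with
  | mem x hx =>
    obtain ⟨i, rfl⟩ := hx
    exact Pi.single_eq_of_ne (by rintro rfl; exact hj i.2) 1
  | zero => rfl
  | add x y _ _ hx hy => simp [hx, hy]
  | smul a x _ hx => simp [hx]

lemma finrank_stdSub (J : Finset (Fin n)) : finrank ℝ (stdSub J) = J.card := by
  classical
  have hli : LinearIndependent ℝ
      (fun j : {x // x ∈ J} => (Pi.single (j : Fin n) (1 : ℝ) : Fin n → ℝ)) := by
    have h2 := (Pi.basisFun ℝ (Fin n)).linearIndependent.comp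
      (fun j : {x // x ∈ J} => (j : Fin n)) Subtype.val_injective
    simpa [Function.comp_def] using h2
  rw [stdSub, finrank_span_eq_card hli, Fintype.card_coe]

lemma exists_ne_zero_mem_inf {S T : Submodule ℝ (Fin n → ℝ)}
    (h : n < finrank ℝ S + finrank ℝ T) : ∃ v : Fin n → ℝ, v ≠ 0 ∧ v ∈ S ∧ v ∈ T := by
  have hsum := Submodule.finrank_sup_add_finrank_inf_eq S T
  have hle : finrank ℝ ↥(S ⊔ T) ≤ n := by
    simpa [Module.finrank_fin_fun] using Submodule.finrank_le (S ⊔ T)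
  have hpos : 0 < finrank ℝ ↥(S ⊓ T) := by omega
  have : Nontrivial ↥(S ⊓ T) := Module.nontrivial_of_finrank_pos hpos
  obtain ⟨x, hx⟩ := exists_ne (0 : ↥(S ⊓ T))
  exact ⟨(x : Fin n → ℝ), by simpa using Subtype.coe_injective.ne hx,
    x.2.1, x.2.2⟩

end CFAux


section Spectral

open Finset Module

variable {n : ℕ} {B : Matrix (Fin n) (Fin n) ℝ}

lemma transpose_mul_self_eigU (hB : B.IsHermitian) :
    ((hB.eigenvectorUnitary : Matrix (Fin n) (Fin n) ℝ))ᵀ *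
      (hB.eigenvectorUnitary : Matrix (Fin n) (Fin n) ℝ) = 1 := by
  have h := (Matrix.mem_unitaryGroup_iff').mp hB.eigenvectorUnitary.2
  rwa [star_eq_conjTranspose, conjTranspose_eq_transpose_of_trivial] at h

lemma self_mul_transpose_eigU (hB : B.IsHermitian) :
    (hB.eigenvectorUnitary : Matrix (Fin n) (Fin n) ℝ) *
      ((hB.eigenvectorUnitary : Matrix (Fin n) (Fin n) ℝ))ᵀ = 1 := by
  have h := (Matrix.mem_unitaryGroup_iff).mp hB.eigenvectorUnitary.2
  rwa [star_eq_conjTranspose, conjTranspose_eq_transpose_of_trivial] at h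

lemma isUnit_eigU (hB : B.IsHermitian) :
    IsUnit (hB.eigenvectorUnitary : Matrix (Fin n) (Fin n) ℝ) :=
  ⟨⟨_, ((hB.eigenvectorUnitary : Matrix (Fin n) (Fin n) ℝ))ᵀ,
    self_mul_transpose_eigU hB, transpose_mul_self_eigU hB⟩, rfl⟩

lemma tr_mul_diag_eigU (hB : B.IsHermitian) :
    ((hB.eigenvectorUnitary : Matrix (Fin n) (Fin n) ℝ))ᵀ * B *
      (hB.eigenvectorUnitary : Matrix (Fin n) (Fin n) ℝ) =
      Matrix.diagonal hB.eigenvalues := by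
  have h := hB.conjStarAlgAut_star_eigenvectorUnitary
  rw [Unitary.conjStarAlgAut_star_apply] at h
  rw [star_eq_conjTranspose, conjTranspose_eq_transpose_of_trivial] at h
  rw [h]
  rfl

lemma norm_mulVec_eigU (hB : B.IsHermitian) (d : Fin n → ℝ) :
    ((hB.eigenvectorUnitary : Matrix (Fin n) (Fin n) ℝ) *ᵥ d) ⬝ᵥ
      ((hB.eigenvectorUnitary : Matrix (Fin n) (Fin n) ℝ) *ᵥ d) = ∑ i, d i ^ 2 := by
  rw [dot_mulVec_left, Matrix.mulVec_mulVec, transpose_mul_self_eigU hB, Matrix.one_mulVec]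
  simp [dotProduct, sq]

lemma quad_mulVec_eigU (hB : B.IsHermitian) (d : Fin n → ℝ) :
    ((hB.eigenvectorUnitary : Matrix (Fin n) (Fin n) ℝ) *ᵥ d) ⬝ᵥ
      (B *ᵥ ((hB.eigenvectorUnitary : Matrix (Fin n) (Fin n) ℝ) *ᵥ d)) =
      ∑ i, hB.eigenvalues i * d i ^ 2 := by
  rw [dot_mulVec_left, Matrix.mulVec_mulVec, Matrix.mulVec_mulVec, tr_mul_diag_eigU hB]
  simp [dotProduct, Matrix.mulVec_diagonal, sq]
  ring_nf
  exact Finset.sum_congr rfl fun i _ => by ring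

/-- The coordinate subspace spanned by the eigenvectors indexed by `J`. -/
noncomputable def eigSpan (hB : B.IsHermitian) (J : Finset (Fin n)) :
    Submodule ℝ (Fin n → ℝ) :=
  (stdSub J).map (Matrix.mulVecLin (hB.eigenvectorUnitary : Matrix (Fin n) (Fin n) ℝ))

lemma finrank_eigSpan (hB : B.IsHermitian) (J : Finset (Fin n)) :
    finrank ℝ (eigSpan hB J) = J.card := by
  have hinj : Function.Injective
      (Matrix.mulVecLin (hB.eigenvectorUnitary : Matrix (Fin n) (Fin n) ℝ)) := by
    have := Matrix.mulVec_injective_iff_isUnit.mpr (isUnit_eigU hB)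
    intro x y hxy
    exact this (by simpa [Matrix.mulVecLin_apply] using hxy)
  rw [eigSpan, ← (Submodule.equivMapOfInjective _ hinj (stdSub J)).finrank_eq,
    finrank_stdSub]

lemma eigSpan_repr (hB : B.IsHermitian) {J : Finset (Fin n)} {v : Fin n → ℝ}
    (hv : v ∈ eigSpan hB J) :
    ∃ d : Fin n → ℝ, (∀ j ∉ J, d j = 0) ∧
      v = (hB.eigenvectorUnitary : Matrix (Fin n) (Fin n) ℝ) *ᵥ d := by
  obtain ⟨d, hd, rfl⟩ := hv
  exact ⟨d, fun j hj => stdSub_apply_eq_zero hd hj, rfl⟩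

lemma quad_le_on_eigSpan (hB : B.IsHermitian) {J : Finset (Fin n)} {c : ℝ}
    (hc : ∀ i ∈ J, hB.eigenvalues i ≤ c) {v : Fin n → ℝ} (hv : v ∈ eigSpan hB J) :
    v ⬝ᵥ (B *ᵥ v) ≤ c * (v ⬝ᵥ v) := by
  obtain ⟨d, hd, rfl⟩ := eigSpan_repr hB hv
  rw [quad_mulVec_eigU hB, norm_mulVec_eigU hB, Finset.mul_sum]
  refine Finset.sum_le_sum fun i _ => ?_
  by_cases hi : i ∈ J
  · exact mul_le_mul_of_nonneg_right (hc i hi) (sq_nonneg _)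
  · simp [hd i hi]

lemma quad_ge_on_eigSpan (hB : B.IsHermitian) {J : Finset (Fin n)} {c : ℝ}
    (hc : ∀ i ∈ J, c ≤ hB.eigenvalues i) {v : Fin n → ℝ} (hv : v ∈ eigSpan hB J) :
    c * (v ⬝ᵥ v) ≤ v ⬝ᵥ (B *ᵥ v) := by
  obtain ⟨d, hd, rfl⟩ := eigSpan_repr hB hv
  rw [quad_mulVec_eigU hB, norm_mulVec_eigU hB, Finset.mul_sum]
  refine Finset.sum_le_sum fun i _ => ?_
  by_cases hi : i ∈ J
  · exact mul_le_mul_of_nonneg_right (hc i hi) (sq_nonneg _)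
  · simp [hd i hi]

lemma eigDesc_eq (hB : B.IsHermitian) (k : Fin n) :
    eigDesc B k = hB.eigenvalues (Tuple.sort hB.eigenvalues k.rev) := by
  rw [eigDesc, dif_pos hB]
  rfl

/-- Core Courant–Fischer-type bound: if the quadratic form of `B` is bounded by `c` on a
subspace `T` with `n ≤ k + dim T`, then the `k`-th largest eigenvalue of `B` is at most `c`. -/
lemma eigDesc_le_of_subspace (hB : B.IsHermitian) (k : Fin n) {c : ℝ}
    (T : Submodule ℝ (Fin n → ℝ)) (hdim : n ≤ (k : ℕ) + finrank ℝ T)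
    (hq : ∀ v ∈ T, v ⬝ᵥ (B *ᵥ v) ≤ c * (v ⬝ᵥ v)) : eigDesc B k ≤ c := by
  classical
  set σ := Tuple.sort hB.eigenvalues with hσ
  set J : Finset (Fin n) := (Finset.Ici k.rev).image σ with hJ
  have hcard : J.card = (k : ℕ) + 1 := by
    rw [hJ, Finset.card_image_of_injective _ σ.injective, Fin.card_Ici]
    have h1 := k.isLt
    have h2 : (k.rev : ℕ) = n - 1 - (k : ℕ) := by
      simp [Fin.rev]; omega
    omega
  have hrank : finrank ℝ (eigSpan hB J) = (k : ℕ) + 1 := by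
    rw [finrank_eigSpan hB J, hcard]
  obtain ⟨v, hv0, hvS, hvT⟩ := exists_ne_zero_mem_inf
    (S := eigSpan hB J) (T := T) (by omega)
  have h1 : eigDesc B k * (v ⬝ᵥ v) ≤ v ⬝ᵥ (B *ᵥ v) := by
    refine quad_ge_on_eigSpan hB (fun i hi => ?_) hvS
    rw [hJ] at hi
    obtain ⟨j, hj, rfl⟩ := Finset.mem_image.mp hi
    rw [eigDesc_eq hB k]
    exact Tuple.monotone_sort hB.eigenvalues (Finset.mem_Ici.mp hj)
  exact le_of_mul_le_mul_right (h1.trans (hq v hvT)) (dot_self_pos hv0)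

/-- The subspace spanned by the `n - k` "bottom" eigenvectors. -/
lemma exists_bot_subspace (hB : B.IsHermitian) (k : Fin n) :
    ∃ T : Submodule ℝ (Fin n → ℝ), finrank ℝ T + (k : ℕ) = n ∧
      ∀ v ∈ T, v ⬝ᵥ (B *ᵥ v) ≤ eigDesc B k * (v ⬝ᵥ v) := by
  classical
  set σ := Tuple.sort hB.eigenvalues with hσ
  set J : Finset (Fin n) := (Finset.Iic k.rev).image σ with hJ
  refine ⟨eigSpan hB J, ?_, fun v hv => ?_⟩
  · rw [finrank_eigSpan hB J, hJ, Finset.card_image_of_injective _ σ.injective,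
      Fin.card_Iic]
    have h1 := k.isLt
    have h2 : (k.rev : ℕ) = n - 1 - (k : ℕ) := by
      simp [Fin.rev]; omega
    omega
  · refine quad_le_on_eigSpan hB (fun i hi => ?_) hv
    rw [hJ] at hi
    obtain ⟨j, hj, rfl⟩ := Finset.mem_image.mp hi
    rw [eigDesc_eq hB k]
    exact Tuple.monotone_sort hB.eigenvalues (Finset.mem_Iic.mp hj)

lemma one_le_eigenvalues_of_sub_one {M : Matrix (Fin n) (Fin n) ℝ} (hM : M.IsHermitian)
    (h : (M - 1).PosSemidef) (i : Fin n) : 1 ≤ hM.eigenvalues i := by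
  set v : Fin n → ℝ := ⇑(hM.eigenvectorBasis i) with hv
  have hMv : M *ᵥ v = hM.eigenvalues i • v := hM.mulVec_eigenvectorBasis i
  have hnorm : v ⬝ᵥ v = 1 := by
    have h1 : ‖hM.eigenvectorBasis i‖ = 1 := hM.eigenvectorBasis.orthonormal.1 i
    have h2 : (inner ℝ (hM.eigenvectorBasis i) (hM.eigenvectorBasis i) : ℝ) = 1 := by
      rw [real_inner_self_eq_norm_mul_norm, h1, mul_one]
    rw [PiLp.inner_apply] at h2
    simpa [dotProduct, RCLike.inner_apply, ← sq] using h2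
  have h3 := h.dotProduct_mulVec_nonneg v
  have h4 : star v = v := by
    funext j; simp
  rw [h4, Matrix.sub_mulVec, hMv, Matrix.one_mulVec, dotProduct_sub, dotProduct_smul,
    hnorm] at h3
  simp at h3
  linarith

lemma sum_eigDesc (hB : B.IsHermitian) (f : ℝ → ℝ) :
    ∑ i, f (eigDesc B i) = ∑ i, f (hB.eigenvalues i) := by
  have h : ∀ i : Fin n, eigDesc B i =
      hB.eigenvalues ((Fin.revPerm.trans (Tuple.sort hB.eigenvalues)) i) := fun i => by
    rw [eigDesc_eq hB i]; rfl
  calc ∑ i, f (eigDesc B i)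
      = ∑ i, f (hB.eigenvalues ((Fin.revPerm.trans (Tuple.sort hB.eigenvalues)) i)) := by
        exact Finset.sum_congr rfl fun i _ => by rw [h i]
    _ = ∑ i, f (hB.eigenvalues i) :=
        Fintype.sum_equiv _ _ _ (fun i => rfl)

lemma frobSq_eq_trace {m : ℕ} (H : Matrix (Fin m) (Fin m) ℝ) :
    frobSq H = Matrix.trace (Hᵀ * H) := by
  rw [frobSq, Matrix.trace]
  rw [Finset.sum_comm]
  refine Finset.sum_congr rfl fun j _ => ?_
  simp [Matrix.mul_apply, Matrix.diag, sq]

lemma frobSq_matLog (hB : B.IsHermitian) :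
    frobSq (matLog B) = ∑ i, (Real.log (hB.eigenvalues i)) ^ 2 := by
  classical
  rw [matLog, dif_pos hB]
  set U : Matrix (Fin n) (Fin n) ℝ := (hB.eigenvectorUnitary : Matrix (Fin n) (Fin n) ℝ)
    with hU
  set L : Matrix (Fin n) (Fin n) ℝ :=
    Matrix.diagonal (fun i => Real.log (hB.eigenvalues i)) with hL
  have hstar : star U = Uᵀ := by
    rw [star_eq_conjTranspose, conjTranspose_eq_transpose_of_trivial]
  rw [hstar, frobSq_eq_trace]
  have htr : (U * L * Uᵀ)ᵀ = U * L * Uᵀ := by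
    rw [Matrix.transpose_mul, Matrix.transpose_mul, Matrix.transpose_transpose,
      Matrix.diagonal_transpose, Matrix.mul_assoc]
  rw [htr]
  have : U * L * Uᵀ * (U * L * Uᵀ) = U * (L * L) * Uᵀ := by
    have h1 : Uᵀ * U = 1 := transpose_mul_self_eigU hB
    calc U * L * Uᵀ * (U * L * Uᵀ) = U * (L * ((Uᵀ * U) * (L * Uᵀ))) := by
          simp only [Matrix.mul_assoc]
      _ = U * (L * L) * Uᵀ := by rw [h1]; simp only [Matrix.one_mul, Matrix.mul_assoc]
  rw [this, Matrix.trace_mul_cycle, ← Matrix.mul_assoc, transpose_mul_self_eigU hB,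
    Matrix.one_mul, Matrix.diagonal_mul_diagonal, Matrix.trace_diagonal]
  exact Finset.sum_congr rfl fun i _ => (sq _).symm

lemma sqrtAux (hB : B.PosSemidef) :
    ((hB.1.eigenvectorUnitary : Matrix (Fin n) (Fin n) ℝ) *
      Matrix.diagonal (fun i => Real.sqrt (hB.1.eigenvalues i)) *
      (star (hB.1.eigenvectorUnitary : Matrix (Fin n) (Fin n) ℝ))).IsHermitian ∧
    ((hB.1.eigenvectorUnitary : Matrix (Fin n) (Fin n) ℝ) *
      Matrix.diagonal (fun i => Real.sqrt (hB.1.eigenvalues i)) *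
      (star (hB.1.eigenvectorUnitary : Matrix (Fin n) (Fin n) ℝ))) *
    ((hB.1.eigenvectorUnitary : Matrix (Fin n) (Fin n) ℝ) *
      Matrix.diagonal (fun i => Real.sqrt (hB.1.eigenvalues i)) *
      (star (hB.1.eigenvectorUnitary : Matrix (Fin n) (Fin n) ℝ))) = B := by
  constructor
  · simp only [Matrix.IsHermitian, Matrix.conjTranspose_mul, Matrix.diagonal_conjTranspose,
      Matrix.mul_assoc]
    simp [star_eq_conjTranspose, Matrix.mul_assoc]
  · have hu : star (hB.1.eigenvectorUnitary : Matrix (Fin n) (Fin n) ℝ) *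
        (hB.1.eigenvectorUnitary : Matrix (Fin n) (Fin n) ℝ) = 1 := Unitary.coe_star_mul_self _
    conv_rhs => rw [hB.1.spectral_theorem]
    rw [Unitary.conjStarAlgAut_apply]
    calc _ = (hB.1.eigenvectorUnitary : Matrix (Fin n) (Fin n) ℝ) *
          (Matrix.diagonal (fun i => Real.sqrt (hB.1.eigenvalues i)) *
          (star (hB.1.eigenvectorUnitary : Matrix (Fin n) (Fin n) ℝ) *
          (hB.1.eigenvectorUnitary : Matrix (Fin n) (Fin n) ℝ)) *
          Matrix.diagonal (fun i => Real.sqrt (hB.1.eigenvalues i))) *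
          (star (hB.1.eigenvectorUnitary : Matrix (Fin n) (Fin n) ℝ)) := by
            simp only [Matrix.mul_assoc]
      _ = _ := by
        rw [hu, Matrix.mul_one, Matrix.diagonal_mul_diagonal]
        congr 2
        ext i j
        simp [Matrix.diagonal_apply, Real.mul_self_sqrt (hB.eigenvalues_nonneg i)]

end Spectral

theorem stmt18 {n : ℕ} (A Ahat : Matrix (Fin n) (Fin n) ℝ) (hAs : A.IsSymm) (hAhs : Ahat.IsSymm)
    (hpsd : Ahat.PosSemidef) (hle : (A - Ahat).PosSemidef) :
    (∀ i : Fin n,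
        1 ≤ eigDesc (invSqrt (Ahat + 1) * (A + 1) * invSqrt (Ahat + 1)) i ∧
          eigDesc (invSqrt (Ahat + 1) * (A + 1) * invSqrt (Ahat + 1)) i ≤ eigDesc (A + 1) i) ∧
      Real.sqrt (frobSq (matLog (invSqrt (Ahat + 1) * (A + 1) * invSqrt (Ahat + 1))))
        ≤ Real.sqrt (frobSq (matLog (A + 1))) := by
  classical
  have hA_psd : A.PosSemidef := by
    have h := hle.add hpsd
    simpa using h
  have hP : (Ahat + 1).PosDef := Matrix.PosDef.posSemidef_add hpsd Matrix.PosDef.one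
  have hA1 : (A + 1).PosDef := Matrix.PosDef.posSemidef_add hA_psd Matrix.PosDef.one
  set S : Matrix (Fin n) (Fin n) ℝ :=
    ((hP.posSemidef.1.eigenvectorUnitary : Matrix (Fin n) (Fin n) ℝ) *
      Matrix.diagonal (fun i => Real.sqrt (hP.posSemidef.1.eigenvalues i)) *
      (star (hP.posSemidef.1.eigenvectorUnitary : Matrix (Fin n) (Fin n) ℝ))) with hS_def
  have hinv : invSqrt (Ahat + 1) = S⁻¹ := by
    rw [invSqrt, dif_pos hP.posSemidef]
  rw [hinv]
  have hSh : S.IsHermitian := (sqrtAux hP.posSemidef).1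
  have hSt : Sᵀ = S := by
    rw [← conjTranspose_eq_transpose_of_trivial, hSh.eq]
  have hSS : S * S = Ahat + 1 := (sqrtAux hP.posSemidef).2
  have hdetS : IsUnit S.det := by
    have hd : S.det * S.det = (Ahat + 1).det := by rw [← Matrix.det_mul, hSS]
    have hpos := hP.det_pos
    refine isUnit_iff_ne_zero.mpr fun h0 => ?_
    rw [h0, mul_zero] at hd
    rw [← hd] at hpos
    exact lt_irrefl _ hpos
  have hSiS : S⁻¹ * S = 1 := Matrix.nonsing_inv_mul S hdetS
  have hSSi : S * S⁻¹ = 1 := Matrix.mul_nonsing_inv S hdetS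
  have hSih : (S⁻¹).IsHermitian := by
    rw [Matrix.IsHermitian, Matrix.conjTranspose_nonsing_inv, hSh.eq]
  set M : Matrix (Fin n) (Fin n) ℝ := S⁻¹ * (A + 1) * S⁻¹ with hM_def
  have hMh : M.IsHermitian := by
    rw [Matrix.IsHermitian, hM_def, Matrix.conjTranspose_mul, Matrix.conjTranspose_mul,
      hSih.eq, hA1.isHermitian.eq, Matrix.mul_assoc]
  -- M - 1 is PSD
  have hPid : S⁻¹ * (Ahat + 1) * S⁻¹ = 1 := by
    rw [← hSS, ← Matrix.mul_assoc, Matrix.mul_assoc (S⁻¹ * S), hSiS, Matrix.one_mul, hSSi]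
  have hM1 : (M - 1).PosSemidef := by
    have hkey : M - 1 = S⁻¹ * (A - Ahat) * (S⁻¹)ᴴ := by
      rw [hSih.eq, hM_def]
      have hsplit : S⁻¹ * (A - Ahat) * S⁻¹ =
          S⁻¹ * (A + 1) * S⁻¹ - S⁻¹ * (Ahat + 1) * S⁻¹ := by noncomm_ring
      rw [hsplit, hPid]
    rw [hkey]
    exact hle.mul_mul_conjTranspose_same S⁻¹
  -- part 1
  have part1 : ∀ i : Fin n, 1 ≤ eigDesc M i ∧ eigDesc M i ≤ eigDesc (A + 1) i := by
    intro k
    constructor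
    · rw [eigDesc_eq hMh k]
      exact one_le_eigenvalues_of_sub_one hMh hM1 _
    · obtain ⟨T, hTrank, hTq⟩ := exists_bot_subspace hA1.isHermitian k
      have hinj : Function.Injective (Matrix.mulVecLin S) := by
        have h := Matrix.mulVec_injective_iff_isUnit.mpr ((Matrix.isUnit_iff_isUnit_det S).mpr hdetS)
        intro x y hxy
        exact h (by simpa [Matrix.mulVecLin_apply] using hxy)
      set T' : Submodule ℝ (Fin n → ℝ) := T.map (Matrix.mulVecLin S) with hT'
      have hrank' : Module.finrank ℝ T' = Module.finrank ℝ T :=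
        ((Submodule.equivMapOfInjective _ hinj T).finrank_eq).symm
      have hc0 : 0 ≤ eigDesc (A + 1) k := by
        rw [eigDesc_eq hA1.isHermitian k]
        exact hA1.posSemidef.eigenvalues_nonneg _
      refine eigDesc_le_of_subspace hMh k T' (by omega) ?_
      rintro v ⟨w, hw, rfl⟩
      simp only [Matrix.mulVecLin_apply]
      have e1 : (S *ᵥ w) ⬝ᵥ (M *ᵥ (S *ᵥ w)) = w ⬝ᵥ ((A + 1) *ᵥ w) := by
        rw [Matrix.mulVec_mulVec]
        have hMS : M * S = S⁻¹ * (A + 1) := by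
          rw [hM_def, Matrix.mul_assoc, hSiS, Matrix.mul_one]
        rw [hMS, dot_mulVec_left, Matrix.mulVec_mulVec, hSt, ← Matrix.mul_assoc,
          hSSi, Matrix.one_mul]
      have e2 : (S *ᵥ w) ⬝ᵥ (S *ᵥ w) = w ⬝ᵥ ((Ahat + 1) *ᵥ w) := by
        rw [dot_mulVec_left, Matrix.mulVec_mulVec, hSt, hSS]
      have e3 : w ⬝ᵥ w ≤ (S *ᵥ w) ⬝ᵥ (S *ᵥ w) := by
        rw [e2, Matrix.add_mulVec, Matrix.one_mulVec, dotProduct_add]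
        have h4 := hpsd.dotProduct_mulVec_nonneg w
        have h5 : star w = w := by funext j; simp
        rw [h5] at h4
        linarith
      rw [e1]
      calc w ⬝ᵥ ((A + 1) *ᵥ w) ≤ eigDesc (A + 1) k * (w ⬝ᵥ w) := hTq w hw
        _ ≤ eigDesc (A + 1) k * ((S *ᵥ w) ⬝ᵥ (S *ᵥ w)) :=
            mul_le_mul_of_nonneg_left e3 hc0
  refine ⟨part1, ?_⟩
  -- part 2
  apply Real.sqrt_le_sqrt
  rw [frobSq_matLog hMh, frobSq_matLog hA1.isHermitian,
    ← sum_eigDesc hMh (fun x => (Real.log x) ^ 2),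
    ← sum_eigDesc hA1.isHermitian (fun x => (Real.log x) ^ 2)]
  refine Finset.sum_le_sum fun i _ => ?_
  obtain ⟨h1i, h2i⟩ := part1 i
  have hlog0 : 0 ≤ Real.log (eigDesc M i) := Real.log_nonneg h1i
  have hloglog : Real.log (eigDesc M i) ≤ Real.log (eigDesc (A + 1) i) :=
    Real.log_le_log (lt_of_lt_of_le one_pos h1i) h2i
  exact pow_le_pow_left₀ hlog0 hloglog 2
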